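/- If S is a maximal sum-free set in the elementary abelian 3-group G = (ℤ/3ℤ)^n (n ≥ 1) and x ∈ S, then G = S ∪ x⁻¹S ∪ xS and |S| = |G|/3 = 3^{n−1}. -/

import Mathlib

open Pointwise

/-- A subset `S` of an additive group is sum-free if for all `s₁, s₂ ∈ S`, `s₁ + s₂ ∉ S`. -/
def AddSumFree {G : Type*} [AddGroup G] (S : Set G) : Prop :=
  ∀ a ∈ S, ∀ b ∈ S, a + b ∉ S

/-- A maximal sum-free set: a (nonempty) sum-free set of maximum cardinality
among all sum-free subsets. -/
def IsMaxAddSumFree {G : Type*} [AddGroup G] (S : Set G) : Prop :=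
  S.Nonempty ∧ AddSumFree S ∧ ∀ T : Set G, AddSumFree T → T.ncard ≤ S.ncard

private lemma zmod3_add_self_thrice : ∀ v : ZMod 3, v + v + v = 0 := by decide

private lemma zmod3_cases : ∀ v : ZMod 3, v = 0 ∨ v = 1 ∨ v = 2 := by decide

private lemma pi_add_self_thrice {n : ℕ} (v : Fin n → ZMod 3) : v + v + v = 0 := by
  funext i
  simpa using zmod3_add_self_thrice (v i)

/-- If `S` is a maximal sum-free set in `(ℤ/3ℤ)^n` and `x ∈ S`, then
`G = S ∪ (-x + S) ∪ (x + S)` and `|S| = |G|/3 = 3^(n-1)`. -/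
theorem maxSumFree_translates_cover (n : ℕ) (hn : 1 ≤ n) (S : Set (Fin n → ZMod 3))
    (hS : IsMaxAddSumFree S) (x : Fin n → ZMod 3) (hx : x ∈ S) :
    S ∪ ((-x) +ᵥ S) ∪ (x +ᵥ S) = Set.univ ∧
      S.ncard = Nat.card (Fin n → ZMod 3) / 3 ∧ S.ncard = 3 ^ (n - 1) := by
  classical
  obtain ⟨-, hsf, hmax⟩ := hS
  have hcardG : Nat.card (Fin n → ZMod 3) = 3 ^ n := by
    simp [Nat.card_eq_fintype_card]
  -- disjointness of the three translates
  have d1 : Disjoint S (x +ᵥ S) := by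
    rw [Set.disjoint_left]
    rintro a ha ⟨b, hb, rfl⟩
    exact hsf x hx b hb ha
  have d2 : Disjoint S ((-x) +ᵥ S) := by
    rw [Set.disjoint_left]
    rintro a ha ⟨b, hb, rfl⟩
    refine hsf x hx _ ha ?_
    have h : x + ((-x) +ᵥ b) = b := by simp only [vadd_eq_add]; abel
    rw [h]; exact hb
  have d3 : Disjoint ((-x) +ᵥ S) (x +ᵥ S) := by
    rw [Set.disjoint_left]
    rintro a ⟨b, hb, hb'⟩ ⟨c, hc, rfl⟩
    simp only [vadd_eq_add] at hb'
    have hbc : b = x + (x + c) := by rw [← hb']; abel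
    have hc' : x + b = c := by
      rw [hbc, show x + (x + (x + c)) = (x + x + x) + c by abel, pi_add_self_thrice, zero_add]
    refine hsf x hx b hb ?_
    rw [hc']; exact hc
  -- the union has cardinality 3 * |S|
  have hU : (S ∪ ((-x) +ᵥ S) ∪ (x +ᵥ S)).ncard = 3 * S.ncard := by
    rw [Set.ncard_union_eq (by
        rw [Set.disjoint_union_left]; exact ⟨d1, d3⟩) (Set.toFinite _) (Set.toFinite _),
      Set.ncard_union_eq d2 (Set.toFinite _) (Set.toFinite _),
      Set.ncard_vadd_set, Set.ncard_vadd_set]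
    ring
  -- upper bound: 3 * |S| ≤ 3^n
  have hub : 3 * S.ncard ≤ 3 ^ n := by
    rw [← hU]
    calc (S ∪ ((-x) +ᵥ S) ∪ (x +ᵥ S)).ncard ≤ (Set.univ : Set (Fin n → ZMod 3)).ncard :=
          Set.ncard_le_ncard (Set.subset_univ _) (Set.toFinite _)
      _ = 3 ^ n := by rw [Set.ncard_univ, hcardG]
  -- lower bound via the explicit sum-free set {f | f i0 = 1}
  set i0 : Fin n := ⟨0, hn⟩
  set A : Set (Fin n → ZMod 3) := {f | f i0 = 1} with hA
  have hAsf : AddSumFree A := by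
    intro a ha b hb hab
    have : a i0 + b i0 = (1 : ZMod 3) := hab
    rw [ha, hb] at this
    exact absurd this (by decide)
  set e : Fin n → ZMod 3 := fun _ => 0
  set e1 : Fin n → ZMod 3 := Pi.single i0 1 with he1
  have he1i : e1 i0 = 1 := by simp [he1]
  have partA : A ∪ (e1 +ᵥ A) ∪ ((e1 + e1) +ᵥ A) = Set.univ := by
    ext f
    simp only [Set.mem_union, Set.mem_vadd_set_iff_neg_vadd_mem, Set.mem_univ, iff_true,
      vadd_eq_add, hA, Set.mem_setOf_eq, Pi.add_apply, Pi.neg_apply, he1i]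
    rcases zmod3_cases (f i0) with h | h | h
    · right; rw [h]; exact (by decide : (-(1+1)+0 : ZMod 3) = 1)
    · left; left; exact h
    · left; right; rw [h]; exact (by decide : (-1+2 : ZMod 3) = 1)
  have dA1 : Disjoint A (e1 +ᵥ A) := by
    rw [Set.disjoint_left]
    rintro a ha ⟨b, hb, rfl⟩
    have : e1 i0 + b i0 = (1 : ZMod 3) := ha
    rw [he1i, hb] at this
    exact absurd this (by decide)
  have dA2 : Disjoint A ((e1 + e1) +ᵥ A) := by
    rw [Set.disjoint_left]
    rintro a ha ⟨b, hb, rfl⟩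
    have : e1 i0 + e1 i0 + b i0 = (1 : ZMod 3) := ha
    rw [he1i, hb] at this
    exact absurd this (by decide)
  have dA3 : Disjoint (e1 +ᵥ A) ((e1 + e1) +ᵥ A) := by
    rw [Set.disjoint_left]
    rintro a ⟨b, hb, hb'⟩ ⟨c, hc, rfl⟩
    have h1 : b i0 = (1 : ZMod 3) := hb
    have h2 : c i0 = (1 : ZMod 3) := hc
    have h3 : e1 i0 + b i0 = e1 i0 + e1 i0 + c i0 := by
      have := congrFun hb' i0
      simpa using this
    rw [he1i, h1, h2] at h3
    exact absurd h3 (by decide)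
  have hAcard : 3 * A.ncard = 3 ^ n := by
    have := congrArg Set.ncard partA
    rw [Set.ncard_union_eq (by
        rw [Set.disjoint_union_left]; exact ⟨dA2, dA3⟩) (Set.toFinite _) (Set.toFinite _),
      Set.ncard_union_eq dA1 (Set.toFinite _) (Set.toFinite _),
      Set.ncard_vadd_set, Set.ncard_vadd_set, Set.ncard_univ, hcardG] at this
    omega
  have hApow : A.ncard = 3 ^ (n - 1) := by
    have h3n : 3 ^ n = 3 * 3 ^ (n - 1) := by
      rw [← pow_succ']
      congr 1
      omega
    omega
  have hlb : 3 ^ (n - 1) ≤ S.ncard := hApow ▸ hmax A hAsf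
  have hScard : S.ncard = 3 ^ (n - 1) := by
    have h3n : 3 ^ n = 3 * 3 ^ (n - 1) := by
      rw [← pow_succ']
      congr 1
      omega
    omega
  refine ⟨?_, ?_, hScard⟩
  · apply Set.eq_of_subset_of_ncard_le (Set.subset_univ _)
    · rw [Set.ncard_univ, hcardG, hU, hScard]
      have h3n : 3 ^ n = 3 * 3 ^ (n - 1) := by
        rw [← pow_succ']
        congr 1
        omega
      omega
  · rw [hcardG, hScard]
    have h3n : 3 ^ n = 3 * 3 ^ (n - 1) := by
      rw [← pow_succ']
      congr 1
      omega
    omega
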